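/- Let p be a prime, ζ a primitive p-th root of unity in Z̄_p, and λ = ζ − 1. Fix s in the ring of integers of Q̄_p and define f̃_s(z) = ((λz + s)^p − s^p)/λ^p ∈ Q̄_p[z]. Then f̃_s has integral coefficients, and its reduction modulo the maximal ideal is z^p − c·z, where c is the reduction of s^{p-1}. -/

import Mathlib

open Polynomial

lemma aux_prod_congr (p : ℕ) [hp : Fact p.Prime] (lam : AlgebraicClosure ℚ_[p])
    (T : Finset ℕ) (a b : ℕ → AlgebraicClosure ℚ_[p])
    (ha : ∀ k ∈ T, a k ∈ integralClosure ℤ_[p] (AlgebraicClosure ℚ_[p]))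
    (hb : ∀ k ∈ T, b k ∈ integralClosure ℤ_[p] (AlgebraicClosure ℚ_[p]))
    (hd : ∀ k ∈ T, ∃ c ∈ integralClosure ℤ_[p] (AlgebraicClosure ℚ_[p]), a k - b k = lam * c) :
    ∃ c ∈ integralClosure ℤ_[p] (AlgebraicClosure ℚ_[p]),
      (∏ k ∈ T, a k) - ∏ k ∈ T, b k = lam * c := by
  classical
  induction T using Finset.cons_induction with
  | empty => exact ⟨0, Subalgebra.zero_mem _, by simp⟩
  | cons k T hk ih =>
    obtain ⟨c₁, hc₁, hc₁e⟩ := ih (fun x hx => ha x (Finset.mem_cons_of_mem hx))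
      (fun x hx => hb x (Finset.mem_cons_of_mem hx))
      (fun x hx => hd x (Finset.mem_cons_of_mem hx))
    obtain ⟨c₂, hc₂, hc₂e⟩ := hd k (Finset.mem_cons_self _ _)
    refine ⟨a k * c₁ + c₂ * ∏ x ∈ T, b x, ?_, ?_⟩
    · exact Subalgebra.add_mem _
        (Subalgebra.mul_mem _ (ha k (Finset.mem_cons_self _ _)) hc₁)
        (Subalgebra.mul_mem _ hc₂
          (Subalgebra.prod_mem _ fun x hx => hb x (Finset.mem_cons_of_mem hx)))
    · rw [Finset.prod_cons, Finset.prod_cons]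
      have : a k * ∏ x ∈ T, a x - b k * ∏ x ∈ T, b x
          = a k * ((∏ x ∈ T, a x) - ∏ x ∈ T, b x) + (a k - b k) * ∏ x ∈ T, b x := by ring
      rw [this, hc₁e, hc₂e]; ring

lemma key_unit (p : ℕ) [hp : Fact p.Prime] (ζ : AlgebraicClosure ℚ_[p])
    (hζ : IsPrimitiveRoot ζ p) :
    ∃ u ∈ integralClosure ℤ_[p] (AlgebraicClosure ℚ_[p]),
      (p : AlgebraicClosure ℚ_[p]) = (ζ - 1) ^ (p - 1) * u ∧
      ∃ v ∈ integralClosure ℤ_[p] (AlgebraicClosure ℚ_[p]), u + 1 = (ζ - 1) * v := by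
  classical
  set O := integralClosure ℤ_[p] (AlgebraicClosure ℚ_[p]) with hO
  have hζO : ζ ∈ O := ⟨X ^ p - C 1, monic_X_pow_sub_C 1 hp.out.ne_zero, by simp [hζ.pow_eq_one]⟩
  set lam : AlgebraicClosure ℚ_[p] := ζ - 1 with hlamdef
  have hlamO : lam ∈ O := Subalgebra.sub_mem _ hζO (Subalgebra.one_mem _)
  set t : ℕ → AlgebraicClosure ℚ_[p] := fun k => ∑ j ∈ Finset.range k, ζ ^ j with ht
  have htO : ∀ k, t k ∈ O := fun k =>
    Subalgebra.sum_mem _ fun j _ => Subalgebra.pow_mem _ hζO j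
  have htk : ∀ k, ζ ^ k - 1 = lam * t k := fun k => by
    rw [ht, hlamdef, mul_comm]; exact (geom_sum_mul ζ k).symm
  have htcong : ∀ k, ∃ c ∈ O, t k - (k : AlgebraicClosure ℚ_[p]) = lam * c := by
    intro k
    refine ⟨∑ j ∈ Finset.range k, t j, Subalgebra.sum_mem _ fun j _ => htO j, ?_⟩
    have h0 : t k - (k : AlgebraicClosure ℚ_[p]) = ∑ j ∈ Finset.range k, (ζ ^ j - 1) := by
      rw [ht]; simp [Finset.sum_sub_distrib]
    rw [h0, Finset.mul_sum]
    exact Finset.sum_congr rfl fun j _ => htk j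
  have hprod : (p : AlgebraicClosure ℚ_[p]) = ∏ k ∈ Finset.Ico 1 p, (1 - ζ ^ k) := by
    have hX : (X : (AlgebraicClosure ℚ_[p])[X]) ^ p - C 1 =
        ∏ i ∈ Finset.range p, (X - C (ζ ^ i)) := by
      simpa using X_pow_sub_C_eq_prod hζ hp.out.pos (one_pow p)
    have hsplit : ∏ i ∈ Finset.range p, ((X : (AlgebraicClosure ℚ_[p])[X]) - C (ζ ^ i)) =
        (X - C 1) * ∏ i ∈ Finset.Ico 1 p, (X - C (ζ ^ i)) := by
      rw [Finset.range_eq_Ico, Finset.prod_eq_prod_Ico_succ_bot hp.out.pos]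
      simp
    have hgeom : ((X : (AlgebraicClosure ℚ_[p])[X]) - C 1) * ∑ i ∈ Finset.range p, X ^ i
        = (X - C 1) * ∏ i ∈ Finset.Ico 1 p, (X - C (ζ ^ i)) := by
      rw [← hsplit, ← hX, mul_comm]
      simpa using geom_sum_mul (X : (AlgebraicClosure ℚ_[p])[X]) p
    have hcancel : (∑ i ∈ Finset.range p, (X : (AlgebraicClosure ℚ_[p])[X]) ^ i)
        = ∏ i ∈ Finset.Ico 1 p, (X - C (ζ ^ i)) :=
      mul_left_cancel₀ (X_sub_C_ne_zero 1) hgeom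
    have := congrArg (Polynomial.eval 1) hcancel
    simpa [Polynomial.eval_prod, Polynomial.eval_finset_sum] using this
  have hfac : ∀ k, 1 - ζ ^ k = lam * (-(t k)) := fun k => by linear_combination -(htk k)
  set u := ∏ k ∈ Finset.Ico 1 p, (-(t k)) with hu
  have huO : u ∈ O := Subalgebra.prod_mem _ fun k _ => Subalgebra.neg_mem _ (htO k)
  have hpu : (p : AlgebraicClosure ℚ_[p]) = lam ^ (p - 1) * u := by
    rw [hprod, show (∏ k ∈ Finset.Ico 1 p, (1 - ζ ^ k))
        = ∏ k ∈ Finset.Ico 1 p, (lam * (-(t k))) from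
      Finset.prod_congr rfl (fun k _ => hfac k), Finset.prod_mul_distrib, Finset.prod_const,
      Nat.card_Ico]
  obtain ⟨c, hcO, hce⟩ := aux_prod_congr p lam (Finset.Ico 1 p)
      (fun k => -(t k)) (fun k => -(k : AlgebraicClosure ℚ_[p]))
      (fun k _ => Subalgebra.neg_mem _ (htO k))
      (fun k _ => Subalgebra.neg_mem _ (natCast_mem _ k))
      (fun k _ => by
        obtain ⟨c, hcO, hce⟩ := htcong k
        exact ⟨-c, Subalgebra.neg_mem _ hcO, by
          rw [show -(t k) - -(k : AlgebraicClosure ℚ_[p]) = -(t k - k) from by ring, hce]; ring⟩)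
  have hW : ∏ k ∈ Finset.Ico 1 p, (-(k : AlgebraicClosure ℚ_[p]))
      = (-1) ^ (p - 1) * ((p - 1).factorial : AlgebraicClosure ℚ_[p]) := by
    rw [show (∏ k ∈ Finset.Ico 1 p, (-(k : AlgebraicClosure ℚ_[p])))
        = ∏ k ∈ Finset.Ico 1 p, ((-1) * (k : AlgebraicClosure ℚ_[p])) from
      Finset.prod_congr rfl (fun k _ => by ring),
      Finset.prod_mul_distrib, Finset.prod_const, Nat.card_Ico]
    congr 1
    rw [← Nat.cast_prod]
    congr 1
    conv_lhs => rw [show p = (p - 1) + 1 from (Nat.succ_pred_eq_of_pos hp.out.pos).symm]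
    rw [Finset.prod_Ico_id_eq_factorial]
  have hwil : ∃ m : ℤ, (-1 : ℤ) ^ (p - 1) * ((p - 1).factorial : ℤ) + 1 = p * m := by
    have hz : (((-1 : ℤ) ^ (p - 1) * ((p - 1).factorial : ℤ) + 1 : ℤ) : ZMod p) = 0 := by
      push_cast
      rw [ZMod.wilsons_lemma]
      have h1 : ((-1 : ZMod p)) ^ (p - 1) = 1 := by
        rcases hp.out.eq_two_or_odd' with h | h
        · subst h; rfl
        · exact (Nat.Odd.sub_odd h odd_one).neg_one_pow
      rw [h1]; ring
    rw [ZMod.intCast_zmod_eq_zero_iff_dvd] at hz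
    exact hz
  obtain ⟨m, hm⟩ := hwil
  have hmK : (-1 : AlgebraicClosure ℚ_[p]) ^ (p - 1) * ((p - 1).factorial : AlgebraicClosure ℚ_[p])
      + 1 = (p : AlgebraicClosure ℚ_[p]) * (m : AlgebraicClosure ℚ_[p]) := by
    have := congrArg (fun z : ℤ => (z : AlgebraicClosure ℚ_[p])) hm
    push_cast at this
    exact this
  have hlp : (p : AlgebraicClosure ℚ_[p]) = lam * (lam ^ (p - 2) * u) := by
    rw [hpu, show p - 1 = (p - 2) + 1 by have := hp.out.two_le; omega, pow_succ']
    ring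
  refine ⟨u, huO, hpu, c + lam ^ (p - 2) * u * (m : AlgebraicClosure ℚ_[p]),
    Subalgebra.add_mem _ hcO (Subalgebra.mul_mem _
      (Subalgebra.mul_mem _ (Subalgebra.pow_mem _ hlamO _) huO) (intCast_mem _ m)), ?_⟩
  have hsplit : u + 1 = (u - ∏ k ∈ Finset.Ico 1 p, (-(k : AlgebraicClosure ℚ_[p])))
      + ((-1 : AlgebraicClosure ℚ_[p]) ^ (p - 1) * ((p - 1).factorial : AlgebraicClosure ℚ_[p]) + 1) := by
    rw [hW]; ring
  rw [hsplit, hce, hmK, hlp]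
  ring

/- STATEMENT 10: with `ζ` a primitive `p`-th root of unity in `Q̄_p`,
`λ = ζ - 1`, and `s` in the ring of integers `O = integralClosure ℤ_p Q̄_p`,
the polynomial `f̃_s(z) = ((λ z + s)^p - s^p)/λ^p` has integral coefficients
and reduces modulo the maximal ideal of `O` to `z^p - c z`, where `c` is the
reduction of `s^{p-1}`: its degree-`p` coefficient is `1`, its constant term
is `0`, its linear coefficient is congruent to `-s^{p-1}` modulo `λ`, and all
other coefficients are divisible by `λ` (hence lie in the maximal ideal). -/
theorem lift_reduces_to_additive (p : ℕ) [hp : Fact p.Prime]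
    (ζ : AlgebraicClosure ℚ_[p]) (hζ : IsPrimitiveRoot ζ p)
    (lam : AlgebraicClosure ℚ_[p]) (hlam : lam = ζ - 1)
    (s : AlgebraicClosure ℚ_[p])
    (hs : s ∈ integralClosure ℤ_[p] (AlgebraicClosure ℚ_[p]))
    (f : (AlgebraicClosure ℚ_[p])[X])
    (hf : f = C (lam ^ p)⁻¹ * ((C lam * X + C s) ^ p - C (s ^ p))) :
    (∀ i, f.coeff i ∈ integralClosure ℤ_[p] (AlgebraicClosure ℚ_[p])) ∧
    f.coeff p = 1 ∧
    f.coeff 0 = 0 ∧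
    (∃ u ∈ integralClosure ℤ_[p] (AlgebraicClosure ℚ_[p]),
      f.coeff 1 + s ^ (p - 1) = lam * u) ∧
    (∀ i, 2 ≤ i → i ≤ p - 1 →
      ∃ u ∈ integralClosure ℤ_[p] (AlgebraicClosure ℚ_[p]), f.coeff i = lam * u) := by
  classical
  have hp2 : 2 ≤ p := hp.out.two_le
  have hne : lam ≠ 0 := by
    rw [hlam]; exact sub_ne_zero.mpr (hζ.ne_one hp.out.one_lt)
  have hlamO : lam ∈ integralClosure ℤ_[p] (AlgebraicClosure ℚ_[p]) := by
    rw [hlam]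
    exact Subalgebra.sub_mem _
      ⟨X ^ p - C 1, monic_X_pow_sub_C 1 hp.out.ne_zero, by simp [hζ.pow_eq_one]⟩
      (Subalgebra.one_mem _)
  obtain ⟨u, huO, hpu, v, hvO, huv⟩ := key_unit p ζ hζ
  rw [← hlam] at hpu huv
  have hfactor : C lam * X + C s = C lam * (X + C (s / lam)) := by
    rw [mul_add, ← C_mul]
    congr 2
    field_simp
  have hcoeff : ∀ i, f.coeff i =
      (lam ^ p)⁻¹ * (lam ^ p * ((s / lam) ^ (p - i) * (p.choose i : AlgebraicClosure ℚ_[p]))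
        - if i = 0 then s ^ p else 0) := by
    intro i
    rw [hf, hfactor, mul_pow, ← C_pow, coeff_C_mul, coeff_sub, coeff_C_mul,
      coeff_X_add_C_pow, coeff_C]
  have hc0 : f.coeff 0 = 0 := by
    rw [hcoeff 0]
    simp only [if_pos rfl, Nat.sub_zero, Nat.choose_zero_right, Nat.cast_one, mul_one, div_pow]
    field_simp
    simp
  have hcp : f.coeff p = 1 := by
    rw [hcoeff p]
    simp only [if_neg hp.out.ne_zero, Nat.sub_self, pow_zero, Nat.choose_self, Nat.cast_one,
      one_mul, mul_one, sub_zero]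
    exact inv_mul_cancel₀ (pow_ne_zero p hne)
  have hbig : ∀ i, p < i → f.coeff i = 0 := by
    intro i hip
    rw [hcoeff i, if_neg (by omega), Nat.choose_eq_zero_of_lt hip]
    simp
  have hmid : ∀ i, 1 ≤ i → i ≤ p - 1 →
      f.coeff i = lam ^ (i - 1) *
        (u * (((p.choose i / p : ℕ) : AlgebraicClosure ℚ_[p]) * s ^ (p - i))) := by
    intro i h1 h2
    have hip : i < p := by omega
    have hdvd : p ∣ p.choose i := hp.out.dvd_choose_self (by omega) hip
    have hcast : (p.choose i : AlgebraicClosure ℚ_[p])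
        = (p : AlgebraicClosure ℚ_[p]) * ((p.choose i / p : ℕ) : AlgebraicClosure ℚ_[p]) := by
      rw [← Nat.cast_mul, Nat.mul_div_cancel' hdvd]
    have hexp : lam ^ (p - 1) = lam ^ (i - 1) * lam ^ (p - i) := by
      rw [← pow_add]; congr 1; omega
    rw [hcoeff i, if_neg (by omega), hcast, hpu, hexp, sub_zero]
    have h3 : (lam ^ p)⁻¹ * lam ^ p = 1 := inv_mul_cancel₀ (pow_ne_zero p hne)
    have hcancel : (s / lam) ^ (p - i) * lam ^ (p - i) = s ^ (p - i) := by
      rw [div_pow, div_mul_cancel₀ _ (pow_ne_zero _ hne)]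
    linear_combination ((s / lam) ^ (p - i) * lam ^ (p - i) * lam ^ (i - 1) * u *
        ((p.choose i / p : ℕ) : AlgebraicClosure ℚ_[p])) * h3 +
      (lam ^ (i - 1) * u * ((p.choose i / p : ℕ) : AlgebraicClosure ℚ_[p])) * hcancel
  refine ⟨?_, hcp, hc0, ?_, ?_⟩
  · intro i
    rcases Nat.lt_or_ge i 1 with h | h
    · interval_cases i
      rw [hc0]; exact Subalgebra.zero_mem _
    rcases Nat.lt_or_ge i p with h' | h'
    · rw [hmid i h (by omega)]
      exact Subalgebra.mul_mem _ (Subalgebra.pow_mem _ hlamO _)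
        (Subalgebra.mul_mem _ huO
          (Subalgebra.mul_mem _ (natCast_mem _ _) (Subalgebra.pow_mem _ hs _)))
    rcases Nat.eq_or_lt_of_le h' with h'' | h''
    · rw [← h'', hcp]; exact Subalgebra.one_mem _
    · rw [hbig i h'']; exact Subalgebra.zero_mem _
  · refine ⟨v * s ^ (p - 1), Subalgebra.mul_mem _ hvO (Subalgebra.pow_mem _ hs _), ?_⟩
    have h1 : f.coeff 1 = u * s ^ (p - 1) := by
      rw [hmid 1 le_rfl (by omega)]
      simp [Nat.choose_one_right, Nat.div_self hp.out.pos]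
    rw [h1]
    calc u * s ^ (p - 1) + s ^ (p - 1) = (u + 1) * s ^ (p - 1) := by ring
      _ = lam * (v * s ^ (p - 1)) := by rw [huv]; ring
  · intro i h2 h2'
    refine ⟨lam ^ (i - 2) *
      (u * (((p.choose i / p : ℕ) : AlgebraicClosure ℚ_[p]) * s ^ (p - i))), ?_, ?_⟩
    · exact Subalgebra.mul_mem _ (Subalgebra.pow_mem _ hlamO _)
        (Subalgebra.mul_mem _ huO
          (Subalgebra.mul_mem _ (natCast_mem _ _) (Subalgebra.pow_mem _ hs _)))
    · rw [hmid i (by omega) h2', show i - 1 = (i - 2) + 1 by omega, pow_succ']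
      ring
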